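/- arXiv:1902.04330 — 4 statements merged into one kernel-verified Lean document; each statement's English description precedes it below -/
import Mathlib

section
/- Fix n ≥ 1, distinct points ζ₁,…,ζₙ on the unit circle, and positive reals c₁,…,cₙ. Let F(t) = Σ_{k=1}^n cₖ · 2ζₖ/(ζₖ − t)². Then F has no zeros on the unit circle. -/
open Complex Finset

lemma key_poisson (z t : ℂ) (hz : ‖z‖ = 1) (ht : ‖t‖ = 1)
    (hne : t ≠ z) :
    t * (z / (z - t) ^ 2) = -(((1 : ℝ) / (‖z - t‖) ^ 2 : ℝ) : ℂ) := by
  have hzt : z - t ≠ 0 := sub_ne_zero.mpr (Ne.symm hne)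
  have h1 : z * (starRingEnd ℂ) z = 1 := by
    rw [Complex.mul_conj, Complex.normSq_eq_norm_sq, hz]; norm_num
  have h2 : t * (starRingEnd ℂ) t = 1 := by
    rw [Complex.mul_conj, Complex.normSq_eq_norm_sq, ht]; norm_num
  have habs : ((‖z - t‖) ^ 2 : ℂ) = (z - t) * (starRingEnd ℂ) (z - t) := by
    rw [Complex.mul_conj, Complex.normSq_eq_norm_sq]; norm_num
  have hkey : t * z * (starRingEnd ℂ) (z - t) = -(z - t) := by
    rw [map_sub]
    have : t * z * ((starRingEnd ℂ) z - (starRingEnd ℂ) t)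
        = t * (z * (starRingEnd ℂ) z) - z * (t * (starRingEnd ℂ) t) := by ring
    rw [this, h1, h2]; ring
  have hconj : (starRingEnd ℂ) (z - t) ≠ 0 := by rwa [ne_eq, map_eq_zero]
  push_cast
  rw [habs]
  generalize hw : (starRingEnd ℂ) (z - t) = w at hkey hconj ⊢
  field_simp
  linear_combination hkey

theorem sum_poisson_deriv_no_zeros_on_circle
    (n : ℕ) (hn : 1 ≤ n)
    (ζ : Fin n → ℂ) (hζ : ∀ k, ‖ζ k‖ = 1)
    (hdist : Function.Injective ζ)
    (c : Fin n → ℝ) (hc : ∀ k, 0 < c k)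
    (F : ℂ → ℂ)
    (hF : ∀ t : ℂ, F t = ∑ k, (c k : ℂ) * (2 * ζ k) / (ζ k - t) ^ 2) :
    ∀ t : ℂ, ‖t‖ = 1 → (∀ k, t ≠ ζ k) → F t ≠ 0 := by
  intro t ht hne hF0
  have key : t * F t = ((∑ k, -(2 * c k / (‖ζ k - t‖) ^ 2) : ℝ) : ℂ) := by
    rw [hF, Finset.mul_sum]
    push_cast
    refine Finset.sum_congr rfl fun k _ => ?_
    have hthis := key_poisson (ζ k) t (hζ k) ht (hne k)
    push_cast at hthis
    calc t * ((c k : ℂ) * (2 * ζ k) / (ζ k - t) ^ 2)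
        = (2 * (c k : ℂ)) * (t * (ζ k / (ζ k - t) ^ 2)) := by ring
      _ = -(2 * (c k : ℂ) / ((‖ζ k - t‖) ^ 2 : ℂ)) := by rw [hthis]; ring
  have hsum : (∑ k, -(2 * c k / (‖ζ k - t‖) ^ 2) : ℝ) < 0 := by
    apply Finset.sum_neg
    · intro k _
      have hpos : 0 < ‖ζ k - t‖ :=
        norm_pos_iff.mpr (sub_ne_zero.mpr (Ne.symm (hne k)))
      have : 0 < 2 * c k / (‖ζ k - t‖) ^ 2 := by
        have := hc k; positivity
      linarith
    · exact Finset.univ_nonempty_iff.mpr ⟨⟨0, hn⟩⟩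
  rw [hF0, mul_zero] at key
  have : (∑ k, -(2 * c k / (‖ζ k - t‖) ^ 2) : ℝ) = 0 := by
    exact_mod_cast key.symm
  linarith
end

section
/- Fix n ≥ 1, distinct points ζ₁,…,ζₙ on the unit circle, and positive reals c₁,…,cₙ. Let F(t) = Σ_{k=1}^n cₖ · 2ζₖ/(ζₖ − t)². If t₀ ∈ ℂ with t₀ ≠ 0 and F(t₀) = 0, then F(1/conj(t₀)) = 0; that is, the zeros of F occur in pairs symmetric with respect to reflection in the unit circle. -/
open Complex Finset

theorem sum_poisson_deriv_zeros_symmetric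
    (n : ℕ) (hn : 1 ≤ n)
    (ζ : Fin n → ℂ) (hζ : ∀ k, ‖ζ k‖ = 1)
    (hdist : Function.Injective ζ)
    (c : Fin n → ℝ) (hc : ∀ k, 0 < c k)
    (F : ℂ → ℂ)
    (hF : ∀ t : ℂ, F t = ∑ k, (c k : ℂ) * (2 * ζ k) / (ζ k - t) ^ 2)
    (t₀ : ℂ) (ht₀ : t₀ ≠ 0) (hpole : ∀ k, t₀ ≠ ζ k)
    (hzero : F t₀ = 0) :
    F (1 / starRingEnd ℂ t₀) = 0 := by
  have hct : starRingEnd ℂ t₀ ≠ 0 := by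
    simpa using ht₀
  have hsum : ∑ k, (c k : ℂ) * (2 * ζ k) / (ζ k - t₀) ^ 2 = 0 := by
    rw [← hF]; exact hzero
  have key : ∀ k : Fin n, (c k : ℂ) * (2 * ζ k) / (ζ k - 1 / starRingEnd ℂ t₀) ^ 2
      = (starRingEnd ℂ t₀) ^ 2 *
        starRingEnd ℂ ((c k : ℂ) * (2 * ζ k) / (ζ k - t₀) ^ 2) := by
    intro k
    have hz : ζ k ≠ 0 := by
      intro h
      have := hζ k
      rw [h] at this
      simp at this
    have hmc : ζ k * starRingEnd ℂ (ζ k) = 1 := by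
      rw [Complex.mul_conj]
      norm_cast
      simp [Complex.normSq_eq_norm_sq, hζ k]
    have hcz : starRingEnd ℂ (ζ k) = 1 / ζ k := by
      rw [eq_div_iff hz]
      linear_combination hmc
    have h1 : ζ k - t₀ ≠ 0 := sub_ne_zero.mpr fun h => hpole k h.symm
    have h3 : ζ k - 1 / starRingEnd ℂ t₀ ≠ 0 := by
      rw [sub_ne_zero]
      intro h
      apply hpole k
      have h' : ζ k * starRingEnd ℂ t₀ = 1 := by
        field_simp at h
        linear_combination h
      have hctz : starRingEnd ℂ t₀ = starRingEnd ℂ (ζ k) := by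
        rw [hcz, eq_div_iff hz]
        linear_combination h'
      have := congrArg (starRingEnd ℂ) hctz
      simpa using this
    rw [map_div₀, map_mul, map_mul, map_pow, map_sub, Complex.conj_ofReal, hcz,
      map_ofNat (starRingEnd ℂ) 2]
    have h2 : 1 / ζ k - starRingEnd ℂ t₀ ≠ 0 := by
      rw [sub_ne_zero]
      intro h
      apply h3
      rw [sub_eq_zero, ← h]
      field_simp
    rw [mul_div_assoc', div_eq_div_iff (pow_ne_zero 2 h3) (pow_ne_zero 2 h2)]
    field_simp
    ring
  rw [hF]
  calc (∑ k, (c k : ℂ) * (2 * ζ k) / (ζ k - 1 / starRingEnd ℂ t₀) ^ 2)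
      = ∑ k, (starRingEnd ℂ t₀) ^ 2 *
          starRingEnd ℂ ((c k : ℂ) * (2 * ζ k) / (ζ k - t₀) ^ 2) :=
        Finset.sum_congr rfl fun k _ => key k
    _ = (starRingEnd ℂ t₀) ^ 2 *
          starRingEnd ℂ (∑ k, (c k : ℂ) * (2 * ζ k) / (ζ k - t₀) ^ 2) := by
        rw [map_sum, Finset.mul_sum]
    _ = 0 := by rw [hsum]; simp
end

section
/- Fix n ≥ 1, distinct points ζ₁,…,ζₙ on the unit circle, and positive reals c₁,…,cₙ. The function g(t) = Σ_{k=1}^n cₖ(ζₖ+t)/(ζₖ−t) has at most n − 1 critical points in the open unit disc, counted with multiplicity. -/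
open Complex Finset Metric Polynomial
open scoped Classical

lemma myReflect_sum {ι : Type*} (N : ℕ) (s : Finset ι) (p : ι → Polynomial ℂ) :
    reflect N (∑ i ∈ s, p i) = ∑ i ∈ s, reflect N (p i) := by
  induction s using Finset.cons_induction with
  | empty => simp
  | cons a s ha ih => rw [Finset.sum_cons, Finset.sum_cons, reflect_add, ih]

lemma myReflect_prod {ι : Type*} (s : Finset ι) (p : ι → Polynomial ℂ) (d : ι → ℕ)
    (h : ∀ i ∈ s, (p i).natDegree ≤ d i) :
    reflect (∑ i ∈ s, d i) (∏ i ∈ s, p i) = ∏ i ∈ s, reflect (d i) (p i) := by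
  induction s using Finset.cons_induction with
  | empty => simp
  | cons a s ha ih =>
    rw [Finset.sum_cons, Finset.prod_cons, Finset.prod_cons,
      reflect_mul _ _ (h a (Finset.mem_cons_self a s))
        (Polynomial.natDegree_prod_le s p |>.trans
          (Finset.sum_le_sum fun i hi => h i (Finset.mem_cons_of_mem hi))),
      ih fun i hi => h i (Finset.mem_cons_of_mem hi)]

lemma myReflect_pow (f : Polynomial ℂ) (d m : ℕ) (h : f.natDegree ≤ d) :
    reflect (d * m) (f ^ m) = (reflect d f) ^ m := by
  have := myReflect_prod (Finset.range m) (fun _ => f) (fun _ => d) (fun i _ => h)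
  simpa [Finset.prod_const, Finset.sum_const, Finset.card_range, mul_comm] using this

lemma myRootMult_le {P : Polynomial ℂ} (hP : P ≠ 0) {N : ℕ} (hdeg : P.natDegree ≤ N) {μ : ℂ}
    (hsym : reflect N (P.map (starRingEnd ℂ)) = C μ * P) {z : ℂ} (hz : z ≠ 0) :
    P.rootMultiplicity z ≤ P.rootMultiplicity ((starRingEnd ℂ z)⁻¹) := by
  set m := P.rootMultiplicity z with hm
  obtain ⟨R, hR⟩ := Polynomial.pow_rootMultiplicity_dvd P z
  have hmapP : P.map (starRingEnd ℂ) = (X - C (starRingEnd ℂ z)) ^ m * R.map (starRingEnd ℂ) := by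
    rw [hR]; simp [Polynomial.map_mul, Polynomial.map_pow, Polynomial.map_sub, hm]
  have hR0 : R ≠ 0 := by rintro rfl; simp at hR; exact hP hR
  have hmle : m + R.natDegree = P.natDegree := by
    rw [hR, natDegree_mul (pow_ne_zero _ (X_sub_C_ne_zero z)) hR0]
    simp [hm]
  have hmN : m ≤ N := le_trans (by omega) hdeg
  have hRdeg : (R.map (starRingEnd ℂ)).natDegree ≤ N - m := by
    rw [Polynomial.natDegree_map]; omega
  have hXdeg : ((X - C (starRingEnd ℂ z)) ^ m).natDegree ≤ m := by
    simp [natDegree_pow]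
  have hsplit : reflect N (P.map (starRingEnd ℂ))
      = reflect m ((X - C (starRingEnd ℂ z)) ^ m) * reflect (N - m) (R.map (starRingEnd ℂ)) := by
    rw [hmapP, ← reflect_mul _ _ hXdeg hRdeg, Nat.add_sub_cancel' hmN]
  have hrefl : reflect m ((X - C (starRingEnd ℂ z)) ^ m)
      = C ((- starRingEnd ℂ z) ^ m) * (X - C ((starRingEnd ℂ z)⁻¹)) ^ m := by
    have h1 : reflect 1 (X - C (starRingEnd ℂ z)) = 1 - C (starRingEnd ℂ z) * X := by
      rw [reflect_sub, reflect_one_X, reflect_C]; ring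
    have h2 : (1 : Polynomial ℂ) - C (starRingEnd ℂ z) * X
        = C (- starRingEnd ℂ z) * (X - C ((starRingEnd ℂ z)⁻¹)) := by
      have hz' : starRingEnd ℂ z ≠ 0 := by simpa using hz
      have hCC : (C (starRingEnd ℂ z) : Polynomial ℂ) * C ((starRingEnd ℂ z)⁻¹) = 1 := by
        rw [← C_mul, mul_inv_cancel₀ hz', C_1]
      rw [map_neg]
      linear_combination -hCC
    have := myReflect_pow (X - C (starRingEnd ℂ z)) 1 m (by simp)
    rw [one_mul] at this
    rw [this, h1, h2, mul_pow, ← C_pow]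
  have hdvd : (X - C ((starRingEnd ℂ z)⁻¹)) ^ m ∣ C μ * P := by
    rw [← hsym, hsplit, hrefl]
    exact (dvd_mul_left _ _).mul_right _
  have hμ : μ ≠ 0 := by
    rintro rfl
    simp only [map_zero, zero_mul] at hsym
    rw [reflect_eq_zero_iff, Polynomial.map_eq_zero] at hsym
    exact hP hsym
  have hdvd' : (X - C ((starRingEnd ℂ z)⁻¹)) ^ m ∣ P :=
    (IsUnit.dvd_mul_left (isUnit_C.mpr (isUnit_iff_ne_zero.mpr hμ))).mp hdvd
  exact (Polynomial.le_rootMultiplicity_iff hP).mpr hdvd'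

theorem sum_poisson_at_most_n_sub_one_critical_points
    (n : ℕ) (hn : 1 ≤ n)
    (ζ : Fin n → ℂ) (hζ : ∀ k, ‖ζ k‖ = 1)
    (hdist : Function.Injective ζ)
    (c : Fin n → ℝ) (hc : ∀ k, 0 < c k)
    (g : ℂ → ℂ)
    (hg : ∀ t : ℂ, g t = ∑ k, (c k : ℂ) * (ζ k + t) / (ζ k - t)) :
    ∃ P : Polynomial ℂ, P ≠ 0 ∧
      (∀ t ∈ ball (0 : ℂ) 1,
        deriv g t = P.eval t / ∏ k, (ζ k - t) ^ 2) ∧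
      Multiset.card (P.roots.filter (fun z => z ∈ ball (0 : ℂ) 1)) ≤ n - 1 := by
  have hζ0 : ∀ k, ζ k ≠ 0 := fun k h => by simpa [h] using hζ k
  have hone : ∀ k, starRingEnd ℂ (ζ k) * ζ k = 1 := by
    intro k
    rw [mul_comm, Complex.mul_conj]
    norm_cast
    rw [Complex.normSq_eq_norm_sq, hζ k]; norm_num
  set N : ℕ := 2 * (n - 1) with hN
  set P : Polynomial ℂ :=
    ∑ k, C (2 * (c k : ℂ) * ζ k) * ∏ j ∈ Finset.univ.erase k, (C (ζ j) - X) ^ 2 with hPdef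
  have hcard : ∀ k : Fin n, (Finset.univ.erase k).card = n - 1 := by
    intro k; rw [Finset.card_erase_of_mem (mem_univ k), Finset.card_univ, Fintype.card_fin]
  have hdeg1 : ∀ (a : ℂ), ((C a - X : Polynomial ℂ) ^ 2).natDegree ≤ 2 := by
    intro a
    rw [natDegree_pow]
    have h1 : (C a - X : Polynomial ℂ).natDegree ≤ 1 :=
      le_trans (natDegree_sub_le _ _) (by simp)
    omega
  have hdegprod : ∀ k : Fin n, (∏ j ∈ Finset.univ.erase k, (C (ζ j) - X) ^ 2).natDegree ≤ N := by
    intro k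
    refine le_trans (Polynomial.natDegree_prod_le _ _) ?_
    have hb : ∀ j ∈ Finset.univ.erase k, ((C (ζ j) - X) ^ 2).natDegree ≤ 2 :=
      fun j _ => hdeg1 (ζ j)
    refine le_trans (Finset.sum_le_sum hb) ?_
    rw [Finset.sum_const, smul_eq_mul, hcard k, hN]
    omega
  have hdeg : P.natDegree ≤ N := by
    rw [hPdef]
    refine Polynomial.natDegree_sum_le_of_forall_le _ _ (fun k _ => ?_)
    exact le_trans natDegree_mul_le (by rw [natDegree_C, zero_add]; exact hdegprod k)
  -- P is nonzero
  have hP0 : P ≠ 0 := by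
    intro h
    have heval : P.eval (ζ ⟨0, hn⟩) = 0 := by rw [h]; simp
    rw [hPdef] at heval
    simp only [eval_finset_sum, eval_mul, eval_C, eval_prod, eval_pow, eval_sub, eval_X] at heval
    rw [Finset.sum_eq_single (⟨0, hn⟩ : Fin n)] at heval
    · have h1 : (2 * (c ⟨0, hn⟩ : ℂ) * ζ ⟨0, hn⟩) ≠ 0 := by
        have := (hc ⟨0, hn⟩).ne'
        have := hζ0 ⟨0, hn⟩
        simp_all
      have h2 : ∏ j ∈ Finset.univ.erase (⟨0, hn⟩ : Fin n), (ζ j - ζ ⟨0, hn⟩) ^ 2 ≠ 0 := by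
        refine Finset.prod_ne_zero_iff.mpr fun j hj => ?_
        have hjne : j ≠ ⟨0, hn⟩ := (Finset.mem_erase.mp hj).1
        exact pow_ne_zero _ (sub_ne_zero.mpr fun he => hjne (hdist he))
      exact (mul_ne_zero h1 h2) heval
    · intro k _ hk
      refine mul_eq_zero_of_right _ ?_
      refine Finset.prod_eq_zero (Finset.mem_erase.mpr ⟨Ne.symm hk, mem_univ _⟩) ?_
      simp
    · simp
  -- the self-inversive symmetry
  set μ : ℂ := ∏ j, (starRingEnd ℂ (ζ j)) ^ 2 with hμdef
  have hμ0 : μ ≠ 0 := by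
    refine Finset.prod_ne_zero_iff.mpr fun j _ => pow_ne_zero _ ?_
    simpa using hζ0 j
  have hsym : reflect N (P.map (starRingEnd ℂ)) = C μ * P := by
    rw [hPdef, Polynomial.map_sum, myReflect_sum, Finset.mul_sum]
    refine Finset.sum_congr rfl fun k _ => ?_
    rw [Polynomial.map_mul, map_C, Polynomial.map_prod]
    simp only [Polynomial.map_pow, Polynomial.map_sub, map_C, Polynomial.map_X]
    rw [reflect_C_mul]
    have hNsum : N = ∑ _j ∈ Finset.univ.erase k, 2 := by
      rw [Finset.sum_const, smul_eq_mul, hcard k, hN]; ring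
    rw [hNsum, myReflect_prod _ _ _ (fun j _ => hdeg1 _)]
    have hre : ∀ j ∈ Finset.univ.erase k,
        reflect 2 ((C (starRingEnd ℂ (ζ j)) - X) ^ 2)
          = C ((starRingEnd ℂ (ζ j)) ^ 2) * (C (ζ j) - X) ^ 2 := by
      intro j _
      have h1 : (C (starRingEnd ℂ (ζ j)) - X : Polynomial ℂ).natDegree ≤ 1 :=
        le_trans (natDegree_sub_le _ _) (by simp)
      have := myReflect_pow (C (starRingEnd ℂ (ζ j)) - X) 1 2 h1
      rw [show (1 : ℕ) * 2 = 2 from rfl] at this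
      rw [this, reflect_sub, reflect_C, reflect_one_X, pow_one]
      have h2 : (C (starRingEnd ℂ (ζ j)) * X - 1 : Polynomial ℂ)
          = C (starRingEnd ℂ (ζ j)) * (X - C (ζ j)) := by
        have hCC : (C (starRingEnd ℂ (ζ j)) : Polynomial ℂ) * C (ζ j) = 1 := by
          rw [← C_mul, hone j, C_1]
        linear_combination hCC
      rw [h2, mul_pow, ← C_pow, show ((X : Polynomial ℂ) - C (ζ j)) ^ 2 = (C (ζ j) - X) ^ 2 by ring]
    rw [Finset.prod_congr rfl hre, Finset.prod_mul_distrib,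
      show (∏ x ∈ Finset.univ.erase k, C ((starRingEnd ℂ) (ζ x) ^ 2))
          = C (∏ x ∈ Finset.univ.erase k, (starRingEnd ℂ) (ζ x) ^ 2) from
        (map_prod (C : ℂ →+* Polynomial ℂ) _ _).symm]
    have hck : starRingEnd ℂ (2 * (c k : ℂ) * ζ k) = 2 * (c k : ℂ) * starRingEnd ℂ (ζ k) := by
      simp [map_mul, Complex.conj_ofReal, map_ofNat]
    have hsc : starRingEnd ℂ (2 * (c k : ℂ) * ζ k)
          * (∏ x ∈ Finset.univ.erase k, (starRingEnd ℂ (ζ x)) ^ 2)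
        = μ * (2 * (c k : ℂ) * ζ k) := by
      rw [hμdef, ← Finset.mul_prod_erase Finset.univ
        (fun j => (starRingEnd ℂ (ζ j)) ^ 2) (mem_univ k), hck]
      linear_combination (-(2 * (c k : ℂ) * starRingEnd ℂ (ζ k) *
        (∏ j ∈ Finset.univ.erase k, (starRingEnd ℂ (ζ j)) ^ 2))) * hone k
    rw [← mul_assoc, ← mul_assoc, ← C_mul, ← C_mul, hsc]
  -- degree drop from vanishing at zero
  set m₀ : ℕ := P.rootMultiplicity 0 with hm₀
  have hXdvd : (X : Polynomial ℂ) ^ m₀ ∣ P := by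
    have := Polynomial.pow_rootMultiplicity_dvd P 0
    simpa using this
  have hdeg2 : P.natDegree ≤ N - m₀ := by
    rw [natDegree_le_iff_coeff_eq_zero]
    intro i hi
    by_cases hiN : N < i
    · exact coeff_eq_zero_of_natDegree_lt (lt_of_le_of_lt hdeg hiN)
    · push_neg at hiN
      have h1 : P.coeff (N - i) = 0 := X_pow_dvd_iff.mp hXdvd (N - i) (by omega)
      have h2 := congrArg (fun q => Polynomial.coeff q i) hsym
      simp only [coeff_C_mul, coeff_reflect, revAt_le hiN, Polynomial.coeff_map, h1,
        map_zero] at h2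
      exact (mul_eq_zero.mp h2.symm).resolve_left hμ0
  have hm₀N : m₀ ≤ P.natDegree := by
    rw [hm₀, ← Polynomial.count_roots]
    exact le_trans (Multiset.count_le_card _ _) (Polynomial.card_roots' P)
  -- pairing of roots under z ↦ (conj z)⁻¹
  set f : ℂ → ℂ := fun z => (starRingEnd ℂ z)⁻¹ with hfdef
  have hfinj : Function.Injective f := by
    intro a b h
    have h2 := inv_injective h
    have := congrArg (starRingEnd ℂ) h2
    simpa using this
  have hf0 : ∀ z : ℂ, z ≠ 0 → f z ≠ 0 := by
    intro z hz
    simp [hfdef, hz]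
  have hff : ∀ z : ℂ, z ≠ 0 → f (f z) = z := by
    intro z hz
    simp [hfdef, map_inv₀]
  have habs : ∀ z : ℂ, ‖f z‖ = ‖z‖⁻¹ := by
    intro z
    simp [hfdef, map_inv₀, Complex.norm_conj]
  have hcount : ∀ z : ℂ, z ≠ 0 → P.roots.count z = P.roots.count (f z) := by
    intro z hz
    rw [Polynomial.count_roots, Polynomial.count_roots]
    refine le_antisymm (myRootMult_le hP0 hdeg hsym hz) ?_
    have h2 := myRootMult_le hP0 hdeg hsym (hf0 z hz)
    rwa [show ((starRingEnd ℂ) (f z))⁻¹ = z from hff z hz] at h2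
  have hmemball : ∀ z : ℂ, z ∈ ball (0:ℂ) 1 ↔ ‖z‖ < 1 := by
    intro z
    rw [mem_ball_zero_iff]
  set S := P.roots with hSdef
  set Sb := S.filter (fun z => z ∈ ball (0:ℂ) 1) with hSb
  set A := S.filter (fun z => ¬ z = 0 ∧ z ∈ ball (0:ℂ) 1) with hA
  set B := S.filter (fun z => 1 < ‖z‖) with hB
  have h1 : Multiset.card Sb = m₀ + Multiset.card A := by
    have hsplit := Multiset.filter_add_not (fun z => z = 0) Sb
    have hc1 : Multiset.card (Sb.filter (fun z => z = 0)) = m₀ := by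
      rw [hSb, Multiset.filter_filter]
      have he : S.filter (fun a => a = 0 ∧ a ∈ ball (0:ℂ) 1) = S.filter (fun a => 0 = a) := by
        refine Multiset.filter_congr fun x _ => ?_
        constructor
        · rintro ⟨h, _⟩; exact h.symm
        · rintro rfl; exact ⟨rfl, by simp [hmemball]⟩
      rw [he, ← Multiset.count_eq_card_filter_eq, hSdef, Polynomial.count_roots]
    have hc2 : Sb.filter (fun z => ¬ z = 0) = A := by
      rw [hSb, Multiset.filter_filter, hA]
    have := congrArg Multiset.card hsplit
    rw [Multiset.card_add, hc1, hc2] at this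
    omega
  have h2 : Multiset.card A ≤ Multiset.card B := by
    have hle : A.map f ≤ B := by
      rw [Multiset.le_iff_count]
      intro w
      by_cases hw : w = 0
      · subst hw
        have h0 : (0:ℂ) ∉ A.map f := by
          intro hmem
          obtain ⟨z, hzA, hfz⟩ := Multiset.mem_map.mp hmem
          have hz0 : ¬ z = 0 := ((Multiset.mem_filter.mp hzA).2).1
          exact hf0 z hz0 hfz
        rw [Multiset.count_eq_zero.mpr h0]
        exact Nat.zero_le _
      · have hz0 : f w ≠ 0 := hf0 w hw
        have hfz : f (f w) = w := hff w hw
        have hcm : (A.map f).count w = A.count (f w) := by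
          conv_lhs => rw [← hfz]
          exact Multiset.count_map_eq_count' f A hfinj (f w)
        rw [hcm, hB, Multiset.count_filter, Multiset.count_filter]
        by_cases hp : ¬ (f w) = 0 ∧ (f w) ∈ ball (0:ℂ) 1
        · rw [if_pos hp]
          have habsz : ‖f w‖ < 1 := (hmemball _).mp hp.2
          have habspos : 0 < ‖f w‖ := by
            simpa [norm_pos_iff] using hz0
          have h1w : 1 < ‖w‖ := by
            rw [← hfz, habs (f w)]
            exact (one_lt_inv₀ habspos).mpr habsz
          rw [if_pos h1w, hcount (f w) hz0, hfz]
        · rw [if_neg hp]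
          exact Nat.zero_le _
    calc Multiset.card A = Multiset.card (A.map f) := (Multiset.card_map f A).symm
      _ ≤ Multiset.card B := Multiset.card_le_card hle
  have h3 : Multiset.card Sb + Multiset.card B ≤ Multiset.card S := by
    have hdisj := Multiset.filter_add_filter (fun z => z ∈ ball (0:ℂ) 1)
      (fun z => 1 < ‖z‖) S
    have hnil : S.filter (fun z => z ∈ ball (0:ℂ) 1 ∧ 1 < ‖z‖) = 0 := by
      refine Multiset.filter_eq_nil.mpr fun a _ h => ?_
      have := (hmemball a).mp h.1
      linarith [h.2]
    rw [hnil, add_zero] at hdisj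
    have hle : Sb + B ≤ S := by
      rw [hSb, hB, hdisj]
      exact Multiset.filter_le _ S
    simpa using Multiset.card_le_card hle
  have h4 : Multiset.card S ≤ P.natDegree := Polynomial.card_roots' P
  refine ⟨P, hP0, ?_, ?_⟩
  · -- the derivative formula
    intro t ht
    have habst : ‖t‖ < 1 := (hmemball t).mp ht
    have hne : ∀ k, ζ k - t ≠ 0 := by
      intro k h
      rw [sub_eq_zero] at h
      rw [← h, hζ k] at habst
      linarith
    have hgF : g = fun s => ∑ k, (c k : ℂ) * (ζ k + s) / (ζ k - s) := funext hg
    have hder : HasDerivAt g (∑ k, 2 * (c k : ℂ) * ζ k / (ζ k - t) ^ 2) t := by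
      rw [hgF]
      refine HasDerivAt.fun_sum fun k _ => ?_
      have hnum : HasDerivAt (fun s => (c k : ℂ) * (ζ k + s)) (c k) t := by
        simpa using ((hasDerivAt_id t).const_add (ζ k)).const_mul (c k : ℂ)
      have hden : HasDerivAt (fun s => ζ k - s) (-1) t := by
        simpa using (hasDerivAt_id t).const_sub (ζ k)
      have h := hnum.fun_div hden (hne k)
      exact h.congr_deriv (by ring)
    rw [hder.deriv]
    have hevalP : P.eval t
        = ∑ k, 2 * (c k : ℂ) * ζ k * ∏ j ∈ Finset.univ.erase k, (ζ j - t) ^ 2 := by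
      rw [hPdef]
      simp [eval_finset_sum, eval_prod]
    rw [hevalP, Finset.sum_div]
    refine Finset.sum_congr rfl fun k _ => ?_
    rw [← Finset.mul_prod_erase Finset.univ (fun j => (ζ j - t) ^ 2) (mem_univ k)]
    have hE : (∏ j ∈ Finset.univ.erase k, (ζ j - t) ^ 2) ≠ 0 :=
      Finset.prod_ne_zero_iff.mpr fun j _ => pow_ne_zero _ (hne j)
    rw [mul_div_mul_right _ _ hE]
  · -- the root count
    have hfin : Multiset.card Sb ≤ n - 1 := by omega
    exact hfin
end

section
/- Let u be a positive harmonic function on the open unit disc 𝔻 that extends continuously to the closed disc minus {1}, with u = 0 on an open arc A of the unit circle containing 1 (except possibly at 1 itself), and suppose u is bounded in some neighborhood of 1 intersected with 𝔻. Then u(t) → 0 as t → 1 with t ∈ 𝔻. -/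
open Complex Metric Filter
open Set

/-- Second derivative test at an interior local max (1D). -/
lemma second_test {g g' : ℝ → ℝ} {a : ℝ}
    (hg : ∀ᶠ t in nhds (0:ℝ), HasDerivAt g (g' t) t)
    (hg' : HasDerivAt g' a 0)
    (hmax : IsLocalMax g 0) : a ≤ 0 := by
  by_contra hpos
  push_neg at hpos
  have h0 : g' 0 = 0 := hmax.hasDerivAt_eq_zero hg.self_of_nhds
  have hslope : Tendsto (slope g' 0) (nhdsWithin 0 {(0:ℝ)}ᶜ) (nhds a) :=
    hasDerivAt_iff_tendsto_slope.mp hg'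
  have hs : ∀ᶠ t in nhds (0:ℝ), 0 < t → 0 < g' t := by
    have h2 : ∀ᶠ t in nhdsWithin 0 {(0:ℝ)}ᶜ, 0 < slope g' 0 t :=
      hslope.eventually (eventually_gt_nhds hpos)
    rw [eventually_nhdsWithin_iff] at h2
    filter_upwards [h2] with t ht htpos
    have hne : t ∈ ({(0:ℝ)}ᶜ : Set ℝ) := by simp [ne_of_gt htpos]
    have := ht hne
    have hsl : slope g' 0 t = g' t / t := by
      simp [slope_def_field, h0]
    rw [hsl] at this
    have := mul_pos this htpos
    rwa [div_mul_cancel₀] at this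
    exact ne_of_gt htpos
  obtain ⟨r, hr, H⟩ := Metric.eventually_nhds_iff.mp ((hg.and hmax).and hs)
  set t₀ := r / 2 with ht₀
  have ht₀pos : 0 < t₀ := by positivity
  have hmem : ∀ t ∈ Set.Icc (0:ℝ) t₀, dist t 0 < r := by
    intro t ht
    rw [Real.dist_eq, sub_zero, _root_.abs_of_nonneg ht.1]
    calc t ≤ t₀ := ht.2
    _ < r := by simp [ht₀]; linarith
  have hmono : StrictMonoOn g (Set.Icc 0 t₀) := by
    apply strictMonoOn_of_deriv_pos (convex_Icc _ _)
    · intro t ht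
      exact ((H (hmem t ht)).1.1.differentiableAt.continuousAt).continuousWithinAt
    · intro t ht
      rw [interior_Icc] at ht
      have hd := (H (hmem t ⟨le_of_lt ht.1, le_of_lt ht.2⟩)).1.1
      rw [hd.deriv]
      exact (H (hmem t ⟨le_of_lt ht.1, le_of_lt ht.2⟩)).2 ht.1
  have h1 : g 0 < g t₀ := hmono (Set.left_mem_Icc.mpr (le_of_lt ht₀pos))
    (Set.right_mem_Icc.mpr (le_of_lt ht₀pos)) ht₀pos
  have h2 : g t₀ ≤ g 0 := (H (hmem t₀ (Set.right_mem_Icc.mpr (le_of_lt ht₀pos)))).1.2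
  linarith

open Complex Metric Filter Set

/-- At an interior local max with enough differentiability, second directional derivative ≤ 0. -/
lemma second_dir {v : ℂ → ℝ} {z₀ : ℂ}
    (hd1 : ∀ᶠ x in nhds z₀, DifferentiableAt ℝ v x)
    (hd2 : DifferentiableAt ℝ (fderiv ℝ v) z₀)
    (hmax : IsLocalMax v z₀) (e : ℂ) :
    fderiv ℝ (fderiv ℝ v) z₀ e e ≤ 0 := by
  set c : ℝ → ℂ := fun t => z₀ + t • e with hc
  have hc0 : c 0 = z₀ := by simp [hc]
  have hcc : Continuous c := by fun_prop
  have hct : Tendsto c (nhds 0) (nhds z₀) := by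
    have := hcc.tendsto 0
    rwa [hc0] at this
  have hcd : ∀ t : ℝ, HasDerivAt c e t := by
    intro t
    simpa [hc] using ((hasDerivAt_id t).smul_const e).const_add z₀
  have hE : ∀ᶠ t in nhds (0:ℝ), DifferentiableAt ℝ v (c t) := hct.eventually hd1
  have hg : ∀ᶠ t in nhds (0:ℝ), HasDerivAt (fun s => v (c s)) (fderiv ℝ v (c t) e) t := by
    filter_upwards [hE] with t ht
    exact ht.hasFDerivAt.comp_hasDerivAt t (hcd t)
  have hg' : HasDerivAt (fun t => fderiv ℝ v (c t) e) (fderiv ℝ (fderiv ℝ v) z₀ e e) 0 := by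
    have h1 : HasDerivAt (fun t => fderiv ℝ v (c t)) (fderiv ℝ (fderiv ℝ v) z₀ e) 0 := by
      have h2 := hd2.hasFDerivAt
      rw [← hc0] at h2
      have := h2.comp_hasDerivAt 0 (hcd 0)
      rwa [hc0] at this
    have := h1.clm_apply (hasDerivAt_const 0 e)
    simpa using this
  have hgmax : IsLocalMax (fun s => v (c s)) 0 := by
    have := hct.eventually hmax
    simpa [IsLocalMax, IsMaxFilter, hc0] using this
  exact second_test hg hg' hgmax -- needs part1

/-- Harmonicity predicate in terms of second Fréchet derivatives. -/
def Harm (v : ℂ → ℝ) (U : Set ℂ) : Prop :=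
  ∀ z ∈ U, DifferentiableAt ℝ v z ∧ DifferentiableAt ℝ (fderiv ℝ v) z ∧
    fderiv ℝ (fderiv ℝ v) z 1 1 + fderiv ℝ (fderiv ℝ v) z Complex.I Complex.I = 0

lemma Harm.mono {v : ℂ → ℝ} {U V : Set ℂ} (h : Harm v U) (hVU : V ⊆ U) : Harm v V :=
  fun z hz => h z (hVU hz)

lemma Harm.sub {v w : ℂ → ℝ} {U : Set ℂ} (hU : IsOpen U)
    (h1 : Harm v U) (h2 : Harm w U) : Harm (fun x => v x - w x) U := by
  intro z hz
  obtain ⟨hv1, hv2, hv3⟩ := h1 z hz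
  obtain ⟨hw1, hw2, hw3⟩ := h2 z hz
  have heq : (fun x => fderiv ℝ (fun y => v y - w y) x)
      =ᶠ[nhds z] (fun x => fderiv ℝ v x - fderiv ℝ w x) := by
    filter_upwards [hU.mem_nhds hz] with x hx
    exact fderiv_sub ((h1 x hx).1) ((h2 x hx).1)
  have hdsub : DifferentiableAt ℝ (fun x => fderiv ℝ v x - fderiv ℝ w x) z := hv2.sub hw2
  refine ⟨hv1.sub hw1, hdsub.congr_of_eventuallyEq heq, ?_⟩
  have h4 : fderiv ℝ (fderiv ℝ (fun y => v y - w y)) z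
      = fderiv ℝ (fderiv ℝ v) z - fderiv ℝ (fderiv ℝ w) z := by
    rw [heq.fderiv_eq]
    exact fderiv_sub hv2 hw2
  rw [h4]
  simp only [ContinuousLinearMap.sub_apply]
  linarith

/-- The real part of a holomorphic function on an open set is harmonic. -/
lemma harm_re_holo {h : ℂ → ℂ} {V : Set ℂ} (hV : IsOpen V) (hd : DifferentiableOn ℂ h V) :
    Harm (fun z => (h z).re) V := by
  have han : AnalyticOnNhd ℂ h V := hd.analyticOnNhd hV
  set Φ : ℂ →L[ℝ] (ℂ →L[ℝ] ℝ) :=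
    Complex.reCLM.smulRight Complex.reCLM - Complex.imCLM.smulRight Complex.imCLM with hΦ
  have hΦa : ∀ c e : ℂ, Φ c e = (c * e).re := by
    intro c e
    simp [hΦ, Complex.mul_re, ContinuousLinearMap.sub_apply,
      ContinuousLinearMap.smulRight_apply, smul_eq_mul]
  set F : ℂ → (ℂ →L[ℝ] ℝ) := fun x => Φ (deriv h x) with hF
  have hkey : ∀ x ∈ V, HasFDerivAt (fun y => (h y).re) (F x) x := by
    intro x hx
    have hdx : HasDerivAt h (deriv h x) x := (hd.differentiableAt (hV.mem_nhds hx)).hasDerivAt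
    have h1 := hdx.hasFDerivAt.restrictScalars ℝ
    have h2 := Complex.reCLM.hasFDerivAt.comp x h1
    have h3 : F x = Complex.reCLM.comp
        ((ContinuousLinearMap.smulRight (1 : ℂ →L[ℂ] ℂ) (deriv h x)).restrictScalars ℝ) := by
      ext e
      simp [hF, hΦa, ContinuousLinearMap.smulRight_apply, smul_eq_mul]
      ring_nf
    rw [h3]
    exact h2
  intro z hz
  have hdz : AnalyticAt ℂ (deriv h) z := (han.deriv) z hz
  have hd2 : HasDerivAt (deriv h) (deriv (deriv h) z) z := hdz.differentiableAt.hasDerivAt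
  have hFd : HasFDerivAt F (Φ.comp ((ContinuousLinearMap.smulRight (1 : ℂ →L[ℂ] ℂ)
      (deriv (deriv h) z)).restrictScalars ℝ)) z :=
    Φ.hasFDerivAt.comp z (hd2.hasFDerivAt.restrictScalars ℝ)
  have heq : (fun x => fderiv ℝ (fun y => (h y).re) x) =ᶠ[nhds z] F := by
    filter_upwards [hV.mem_nhds hz] with x hx
    exact (hkey x hx).fderiv
  refine ⟨(hkey z hz).differentiableAt, hFd.differentiableAt.congr_of_eventuallyEq heq, ?_⟩
  rw [heq.fderiv_eq, hFd.fderiv]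
  simp only [ContinuousLinearMap.comp_apply, ContinuousLinearMap.coe_restrictScalars',
    ContinuousLinearMap.smulRight_apply, ContinuousLinearMap.one_apply, hΦa, smul_eq_mul]
  rw [← Complex.add_re]
  have : (1 : ℂ) * deriv (deriv h) z * 1 + Complex.I * deriv (deriv h) z * Complex.I = 0 := by
    linear_combination deriv (deriv h) z * Complex.I_sq
  rw [this, Complex.zero_re]

set_option maxHeartbeats 1000000 in
/-- Maximum principle: a harmonic function on a bounded open set `U`, continuous on the
closure, which is `≤ 0` on the frontier, is `≤ 0` on `U`. -/
lemma maxp {U : Set ℂ} (hUo : IsOpen U) (hUb : U ⊆ ball (0:ℂ) 1)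
    {v : ℂ → ℝ} (hh : Harm v U) (hc : ContinuousOn v (closure U))
    (hfr : ∀ x ∈ frontier U, v x ≤ 0) : ∀ z ∈ U, v z ≤ 0 := by
  intro z hz
  have hsub : closure U ⊆ closedBall (0:ℂ) 1 :=
    closure_minimal (hUb.trans ball_subset_closedBall) Metric.isClosed_closedBall
  have hcomp : IsCompact (closure U) :=
    Metric.isCompact_of_isClosed_isBounded isClosed_closure
      ((isBounded_closedBall (x := (0:ℂ)) (r := 1)).subset hsub)
  have key : ∀ ε > 0, v z ≤ ε := by
    intro ε hε
    set p : ℂ → ℝ := fun x => x.re * x.re with hp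
    have hpd : ∀ x : ℂ, DifferentiableAt ℝ p x := by
      intro x
      exact (Complex.reCLM.differentiable.differentiableAt.mul
        Complex.reCLM.differentiable.differentiableAt)
    set Ψ₀ : ℂ →L[ℝ] (ℂ →L[ℝ] ℝ) := Complex.reCLM.smulRight Complex.reCLM with hΨ₀
    set Ψ : ℂ →L[ℝ] (ℂ →L[ℝ] ℝ) := Ψ₀ + Ψ₀ with hΨ
    have hpF : ∀ x : ℂ, HasFDerivAt p (Ψ x) x := by
      intro x
      have := (Complex.reCLM.hasFDerivAt (x := x)).mul (Complex.reCLM.hasFDerivAt (x := x))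
      have hΨx : Ψ x = reCLM x • reCLM + reCLM x • reCLM := by
        simp only [hΨ, hΨ₀, ContinuousLinearMap.add_apply, ContinuousLinearMap.smulRight_apply]
      exact this.congr_fderiv hΨx.symm
    set g : ℂ → ℝ := fun x => v x + ε * p x with hg
    have hgc : ContinuousOn g (closure U) := by
      apply hc.add
      exact (continuous_const.mul (Complex.continuous_re.mul Complex.continuous_re)).continuousOn
    obtain ⟨z₀, hz₀m, hz₀max⟩ := hcomp.exists_isMaxOn ⟨z, subset_closure hz⟩ hgc
    have hz₀cases : z₀ ∈ U ∨ z₀ ∈ frontier U := by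
      by_cases hU' : z₀ ∈ U
      · exact Or.inl hU'
      · right
        rw [frontier, hUo.interior_eq]
        exact ⟨hz₀m, hU'⟩
    rcases hz₀cases with hz₀U | hz₀F
    · -- interior maximum: contradiction via second derivative test
      exfalso
      have hnhds : closure U ∈ nhds z₀ := mem_of_superset (hUo.mem_nhds hz₀U) subset_closure
      have hloc : IsLocalMax g z₀ := hz₀max.isLocalMax hnhds
      have hgd1 : ∀ᶠ x in nhds z₀, DifferentiableAt ℝ g x := by
        filter_upwards [hUo.mem_nhds hz₀U] with x hx
        exact ((hh x hx).1).add (((hpd x)).const_mul ε)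
      have hFgeq : (fun x => fderiv ℝ g x) =ᶠ[nhds z₀]
          (fun x => fderiv ℝ v x + (ε • Ψ) x) := by
        filter_upwards [hUo.mem_nhds hz₀U] with x hx
        have h1 : HasFDerivAt g (fderiv ℝ v x + ε • Ψ x) x :=
          ((hh x hx).1.hasFDerivAt).add ((hpF x).const_mul ε)
        rw [h1.fderiv]
        simp
      have hFd2 : DifferentiableAt ℝ (fun x => fderiv ℝ v x + (ε • Ψ) x) z₀ :=
        (hh z₀ hz₀U).2.1.add (ε • Ψ).differentiableAt
      have hgd2 : DifferentiableAt ℝ (fderiv ℝ g) z₀ :=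
        hFd2.congr_of_eventuallyEq hFgeq
      have hval : fderiv ℝ (fderiv ℝ g) z₀ = fderiv ℝ (fderiv ℝ v) z₀ + (ε • Ψ) := by
        rw [hFgeq.fderiv_eq, fderiv_fun_add (hh z₀ hz₀U).2.1 (ε • Ψ).differentiableAt,
          ContinuousLinearMap.fderiv]
      have hA := second_dir hgd1 hgd2 hloc 1
      have hB := second_dir hgd1 hgd2 hloc Complex.I
      rw [hval] at hA hB
      simp only [ContinuousLinearMap.add_apply, ContinuousLinearMap.smul_apply,
        ContinuousLinearMap.coe_smul', Pi.smul_apply] at hA hB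
      have hΨ11 : Ψ 1 1 = 2 := by
        simp [hΨ, hΨ₀, ContinuousLinearMap.add_apply, ContinuousLinearMap.smulRight_apply,
          smul_eq_mul]
        norm_num
      have hΨII : Ψ Complex.I Complex.I = 0 := by
        simp [hΨ, hΨ₀, ContinuousLinearMap.add_apply, ContinuousLinearMap.smulRight_apply,
          smul_eq_mul]
      rw [hΨ11] at hA
      rw [hΨII] at hB
      have hlap := (hh z₀ hz₀U).2.2
      simp only [smul_eq_mul] at hA hB
      linarith
    · -- boundary maximum
      have h1 : g z ≤ g z₀ := hz₀max (subset_closure hz)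
      have h2 : v z₀ ≤ 0 := hfr z₀ hz₀F
      have h3 : z₀.re * z₀.re ≤ 1 := by
        have h4 : ‖z₀‖ ≤ 1 := by
          have := hsub hz₀m
          rwa [mem_closedBall, Complex.dist_eq, sub_zero] at this
        have h5 : |z₀.re| ≤ 1 := le_trans (Complex.abs_re_le_norm z₀) h4
        nlinarith [abs_nonneg z₀.re, le_abs_self z₀.re, neg_abs_le z₀.re]
      have h6 : 0 ≤ p z := mul_self_nonneg _
      have h3' : p z₀ ≤ 1 := h3
      simp only [hg] at h1
      nlinarith [mul_nonneg hε.le h6, mul_le_mul_of_nonneg_left h3' hε.le]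
  by_contra hcon
  push_neg at hcon
  have := key (v z / 2) (by linarith)
  linarith

set_option maxHeartbeats 1600000

/-- `u` is harmonic on `s`: twice continuously differentiable (over `ℝ`) and
satisfies Laplace's equation on `s`. -/
def HarmonicOnSet (u : ℂ → ℝ) (s : Set ℂ) : Prop :=
  ContDiffOn ℝ 2 u s ∧ ∀ z ∈ s,
    iteratedFDeriv ℝ 2 u z ![1, 1] + iteratedFDeriv ℝ 2 u z ![Complex.I, Complex.I] = 0

theorem bounded_positive_harmonic_vanishing_arc_tendsto_zero
    (u : ℂ → ℝ)
    (hharm : HarmonicOnSet u (ball (0 : ℂ) 1))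
    (hpos : ∀ t ∈ ball (0 : ℂ) 1, 0 < u t)
    (hcont : ContinuousOn u (closedBall (0 : ℂ) 1 \ {1}))
    (harc : ∃ ε > 0, ∀ ζ : ℂ, ‖ζ‖ = 1 → ζ ≠ 1 →
      ‖ζ - 1‖ < ε → u ζ = 0)
    (hbdd : ∃ K : ℝ, ∃ δ > 0, ∀ t ∈ ball (0 : ℂ) 1,
      ‖t - 1‖ < δ → u t ≤ K) :
    Tendsto u (nhdsWithin 1 (ball (0 : ℂ) 1)) (nhds 0) := by
  obtain ⟨ε₁, hε₁, harc⟩ := harc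
  obtain ⟨K, δ₁, hδ₁, hK⟩ := hbdd
  -- `u` is `Harm` on the ball
  have hu : Harm u (ball (0:ℂ) 1) := by
    intro z hz
    have hca : ContDiffAt ℝ 2 u z := hharm.1.contDiffAt (isOpen_ball.mem_nhds hz)
    have hd1 : DifferentiableAt ℝ u z := hca.differentiableAt (by norm_num)
    have hd2 : DifferentiableAt ℝ (fderiv ℝ u) z := by
      have := hca.fderiv_right (m := 1) (by norm_num)
      exact this.differentiableAt (by norm_num)
    refine ⟨hd1, hd2, ?_⟩
    have hlap := hharm.2 z hz
    rw [iteratedFDeriv_two_apply, iteratedFDeriv_two_apply] at hlap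
    simpa using hlap
  set δ : ℝ := min (min ε₁ δ₁) 1 with hδdef
  have hδpos : 0 < δ := lt_min (lt_min hε₁ hδ₁) one_pos
  have hδε₁ : δ ≤ ε₁ := le_trans (min_le_left _ _) (min_le_left _ _)
  have hδδ₁ : δ ≤ δ₁ := le_trans (min_le_left _ _) (min_le_right _ _)
  have hδ1 : δ ≤ 1 := min_le_right _ _
  -- maximum of u on the far arc
  set A : Set ℂ := sphere (0:ℂ) 1 \ ball (1:ℂ) δ with hAdef
  have hAcomp : IsCompact A := (isCompact_sphere _ _).diff isOpen_ball
  have hAne : A.Nonempty := by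
    refine ⟨-1, ?_, ?_⟩
    · simp [mem_sphere_iff_norm]
    · simp only [mem_ball, Complex.dist_eq, not_lt]
      have : ‖(-1 - 1 : ℂ)‖ = 2 := by norm_num
      rw [this]; linarith
  have hAsub : A ⊆ closedBall (0:ℂ) 1 \ {1} := by
    rintro x ⟨hx1, hx2⟩
    refine ⟨sphere_subset_closedBall hx1, ?_⟩
    intro hx3
    rw [Set.mem_singleton_iff] at hx3
    exact hx2 (by rw [hx3]; exact mem_ball_self hδpos)
  obtain ⟨ζ₀, hζ₀A, hζ₀max⟩ := hAcomp.exists_isMaxOn hAne (hcont.mono hAsub)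
  set M : ℝ := max (u ζ₀) 0 with hMdef
  have hMnn : 0 ≤ M := le_max_right _ _
  set C : ℝ := 2 * M / δ ^ 2 with hCdef
  have hCnn : 0 ≤ C := by positivity
  have hδ2ne : (δ ^ 2 : ℝ) ≠ 0 := by positivity
  have hCδ : C * δ ^ 2 = 2 * M := by
    rw [hCdef, div_mul_cancel₀ _ hδ2ne]
  -- slit plane membership
  have hslit : ∀ x ∈ closedBall (0:ℂ) 1 \ {1}, (1 - x) ∈ Complex.slitPlane := by
    rintro x ⟨hx1, hx2⟩
    rw [Set.mem_singleton_iff] at hx2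
    rw [mem_closedBall, Complex.dist_eq, sub_zero] at hx1
    rcases lt_or_ge x.re 1 with h | h
    · exact Or.inl (by simp [Complex.sub_re]; linarith)
    · exfalso
      have hre : x.re ≤ ‖x‖ := Complex.re_le_norm x
      have hre1 : x.re = 1 := le_antisymm (le_trans hre hx1) h
      have him : x.im = 0 := by
        have h1 : x.re ^ 2 + x.im ^ 2 ≤ 1 := by
          have := Complex.sq_norm x
          rw [Complex.normSq_apply] at this
          nlinarith [norm_nonneg x]
        nlinarith [sq_nonneg x.im]
      exact hx2 (Complex.ext (by simp [hre1]) (by simp [him]))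
  -- main barrier estimate
  have main : ∀ ε > 0, ∀ η > 0, ∀ z ∈ ball (0:ℂ) 1,
      u z ≤ ε + η * Real.log 2 + C - C * z.re - η * Real.log (‖1 - z‖) := by
    intro ε hε η hη z hzball
    have hzne : z ≠ 1 := by
      intro h
      rw [h, mem_ball, Complex.dist_eq] at hzball
      norm_num at hzball
    have hz1 : 0 < ‖z - 1‖ :=
      norm_pos_iff.mpr (sub_ne_zero.mpr hzne)
    set ρ : ℝ := min (min (Real.exp (-(K / η))) (δ / 2)) (‖z - 1‖ / 2) with hρdef
    have hρpos : 0 < ρ := lt_min (lt_min (Real.exp_pos _) (by linarith)) (by linarith)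
    have hρδ : ρ < δ := lt_of_le_of_lt (le_trans (min_le_left _ _) (min_le_right _ _))
      (by linarith)
    have hρz : ρ < ‖z - 1‖ :=
      lt_of_le_of_lt (min_le_right _ _) (by linarith)
    have hρK : K ≤ η * (Real.log 2 - Real.log ρ) := by
      have h1 : Real.log ρ ≤ -(K / η) := by
        rw [Real.log_le_iff_le_exp hρpos]
        exact le_trans (min_le_left _ _) (min_le_left _ _)
      have h2 : (0:ℝ) ≤ Real.log 2 := Real.log_nonneg one_le_two
      have h3 : K / η ≤ Real.log 2 - Real.log ρ := by linarith
      have h4 := mul_le_mul_of_nonneg_left h3 hη.le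
      rwa [mul_div_cancel₀ _ hη.ne'] at h4
    set U : Set ℂ := ball (0:ℂ) 1 \ closedBall (1:ℂ) ρ with hUdef
    have hUo : IsOpen U := isOpen_ball.sdiff Metric.isClosed_closedBall
    have hUb : U ⊆ ball (0:ℂ) 1 := Set.diff_subset
    have hzU : z ∈ U := by
      refine ⟨hzball, ?_⟩
      rw [mem_closedBall, Complex.dist_eq, not_le]
      exact hρz
  -- the barrier
    set H : ℂ → ℂ := fun x => ((ε + η * Real.log 2 + C : ℝ) : ℂ) - (C:ℝ) * x
      - (η:ℝ) * Complex.log (1 - x) with hHdef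
    set b : ℂ → ℝ := fun x => (H x).re with hbdef
    have hbre : ∀ x : ℂ, b x = ε + η * Real.log 2 + C - C * x.re
        - η * Real.log (‖1 - x‖) := by
      intro x
      simp only [hbdef, hHdef, Complex.sub_re, Complex.mul_re, Complex.ofReal_re,
        Complex.ofReal_im, Complex.log_re]
      ring
    have hHdiff : DifferentiableOn ℂ H (ball (0:ℂ) 1) := by
      intro x hx
      apply DifferentiableAt.differentiableWithinAt
      have hxne : x ≠ 1 := by
        intro h; rw [h, mem_ball, Complex.dist_eq] at hx; norm_num at hx
      have hx1 : (1 - x) ∈ Complex.slitPlane :=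
        hslit x ⟨ball_subset_closedBall hx, by simp [hxne]⟩
      have hlog : DifferentiableAt ℂ (fun y : ℂ => Complex.log (1 - y)) x :=
        (Complex.differentiableAt_log hx1).comp x
          ((differentiableAt_const _).sub differentiableAt_id)
      exact ((differentiableAt_const _).sub
        ((differentiableAt_const _).mul differentiableAt_id)).sub
        ((differentiableAt_const _).mul hlog)
    have hbharm : Harm b (ball (0:ℂ) 1) := harm_re_holo isOpen_ball hHdiff
    have hvharm : Harm (fun x => u x - b x) U :=
      Harm.sub hUo (hu.mono hUb) (hbharm.mono hUb)
    have hclos : closure U ⊆ (closedBall (0:ℂ) 1 \ {1}) ∩ (ball (1:ℂ) ρ)ᶜ := by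
      intro x hx
      have h1 : x ∈ closedBall (0:ℂ) 1 :=
        closure_minimal (hUb.trans ball_subset_closedBall) Metric.isClosed_closedBall hx
      have h2 : x ∈ (ball (1:ℂ) ρ)ᶜ := by
        refine closure_minimal ?_ isOpen_ball.isClosed_compl hx
        intro y hy
        exact fun hmem => hy.2 (ball_subset_closedBall hmem)
      refine ⟨⟨h1, ?_⟩, h2⟩
      intro h3
      rw [Set.mem_singleton_iff] at h3
      exact h2 (by rw [h3]; exact mem_ball_self hρpos)
    have hccont : ContinuousOn (fun x => u x - b x) (closure U) := by
      apply ContinuousOn.sub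
      · exact hcont.mono (fun x hx => (hclos hx).1)
      · intro x hx
        have hx' := (hclos hx).1
        have hslit' := hslit x hx'
        have hlogc : ContinuousAt (fun y : ℂ => Complex.log (1 - y)) x :=
          (continuousAt_clog hslit').comp
            ((continuous_const.sub continuous_id).continuousAt)
        have hHc : ContinuousAt H x := by
          apply ContinuousAt.sub
          · exact (continuous_const.continuousAt).sub
              ((continuous_const.mul continuous_id).continuousAt)
          · exact continuous_const.continuousAt.mul hlogc
        exact (Complex.continuous_re.continuousAt.comp hHc).continuousWithinAt
    -- frontier bound
    have hfrs : frontier U ⊆ sphere (0:ℂ) 1 ∪ sphere (1:ℂ) ρ := by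
      intro x hx
      have h0 : U = ball (0:ℂ) 1 ∩ (closedBall (1:ℂ) ρ)ᶜ := by
        rw [hUdef, Set.diff_eq]
      rw [h0] at hx
      rcases frontier_inter_subset _ _ hx with ⟨ha, _⟩ | ⟨_, hb⟩
      · left
        rwa [frontier_ball (0:ℂ) one_ne_zero] at ha
      · right
        rw [frontier_compl, frontier_closedBall (1:ℂ) hρpos.ne'] at hb
        exact hb
    have hfr : ∀ x ∈ frontier U, u x - b x ≤ 0 := by
      intro x hx
      have hxc := hclos (frontier_subset_closure hx)
      obtain ⟨⟨hxcb, hxne1⟩, hxρ⟩ := hxc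
      rw [Set.mem_singleton_iff] at hxne1
      rw [mem_closedBall, Complex.dist_eq, sub_zero] at hxcb
      have hxρ' : ρ ≤ ‖x - 1‖ := by
        rw [Set.mem_compl_iff, mem_ball, Complex.dist_eq, not_lt] at hxρ
        exact hxρ
      have hre1 : x.re ≤ 1 := le_trans (Complex.re_le_norm x) hxcb
      have habs1x : ‖1 - x‖ = ‖x - 1‖ := by
        exact norm_sub_rev 1 x
      have habspos : 0 < ‖1 - x‖ := by
        rw [habs1x]; linarith
      have habs2 : ‖1 - x‖ ≤ 2 := by
        calc ‖1 - x‖ ≤ ‖(1:ℂ)‖ + ‖x‖ := by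
              simpa using norm_sub_le (1:ℂ) x
        _ ≤ 2 := by simp; linarith
      have hlog2 : Real.log (‖1 - x‖) ≤ Real.log 2 :=
        Real.log_le_log habspos habs2
      have hterm2 : 0 ≤ η * (Real.log 2 - Real.log (‖1 - x‖)) :=
        mul_nonneg hη.le (by linarith)
      have hterm1 : 0 ≤ C * (1 - x.re) := mul_nonneg hCnn (by linarith)
      rw [hbre x]
      by_cases hx1 : ‖x‖ = 1
      · rcases lt_or_ge (‖x - 1‖) δ with hnear | hfar
        · -- near arc: u = 0
          have hu0 : u x = 0 := harc x hx1 hxne1 (lt_of_lt_of_le hnear hδε₁)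
          rw [hu0]
          nlinarith
        · -- far arc: u ≤ M and barrier ≥ M
          have hxA : x ∈ A := by
            refine ⟨by rwa [mem_sphere_iff_norm, sub_zero], ?_⟩
            rw [mem_ball, Complex.dist_eq, not_lt]
            exact hfar
          have huM : u x ≤ M := le_trans (hζ₀max hxA) (le_max_left _ _)
          have hsq : ‖x - 1‖ ^ 2 = 2 - 2 * x.re := by
            rw [Complex.sq_norm, Complex.normSq_apply]
            have h5 := Complex.sq_norm x
            rw [Complex.normSq_apply, hx1] at h5
            simp only [Complex.sub_re, Complex.sub_im, Complex.one_re, Complex.one_im]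
            nlinarith
          have hδsq : δ ^ 2 ≤ ‖x - 1‖ ^ 2 := by
            apply pow_le_pow_left₀ hδpos.le hfar
          have hCM : M ≤ C * (1 - x.re) := by
            nlinarith [mul_nonneg hCnn (sub_nonneg.mpr hδsq)]
          nlinarith
      · -- inner circle : |x-1| = ρ
        have hxsph : x ∈ sphere (1:ℂ) ρ := by
          rcases hfrs hx with h | h
          · exfalso
            rw [mem_sphere_iff_norm, sub_zero] at h
            exact hx1 h
          · exact h
        rw [mem_sphere_iff_norm] at hxsph
        have hxball : x ∈ ball (0:ℂ) 1 := by
          rw [mem_ball, Complex.dist_eq, sub_zero]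
          exact lt_of_le_of_ne hxcb hx1
        have huK : u x ≤ K := hK x hxball (by rw [hxsph]; linarith)
        have hlogρ : Real.log (‖1 - x‖) = Real.log ρ := by
          rw [habs1x, hxsph]
        rw [hlogρ]
        nlinarith
    have hfinal := maxp hUo hUb hvharm hccont hfr z hzU
    rw [hbre z] at hfinal
    linarith
  -- deduce the clean bound
  have main2 : ∀ z ∈ ball (0:ℂ) 1, u z ≤ C * (1 - z.re) := by
    intro z hz
    have hzne : z ≠ 1 := by
      intro h; rw [h, mem_ball, Complex.dist_eq] at hz; norm_num at hz
    have habspos : 0 < ‖1 - z‖ :=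
      norm_pos_iff.mpr (sub_ne_zero.mpr (fun h => hzne h.symm))
    have habs2 : ‖1 - z‖ ≤ 2 := by
      rw [mem_ball, Complex.dist_eq, sub_zero] at hz
      calc ‖1 - z‖ ≤ ‖(1:ℂ)‖ + ‖z‖ := by
            simpa using norm_sub_le (1:ℂ) z
      _ ≤ 2 := by simp; linarith
    set c : ℝ := Real.log 2 - Real.log (‖1 - z‖) with hcdef
    have hc0 : 0 ≤ c := by
      have := Real.log_le_log habspos habs2
      simp [hcdef]; linarith
    have step : ∀ ε > 0, u z ≤ ε + C * (1 - z.re) := by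
      intro ε hε
      by_contra hcon
      push_neg at hcon
      set N : ℝ := u z - (ε + C * (1 - z.re)) with hNdef
      have hN : 0 < N := by simp [hNdef]; linarith
      set η : ℝ := N / (2 * (c + 1)) with hηdef
      have hη : 0 < η := by positivity
      have hmm := main ε hε η hη z hz
      have h1 : η * c ≤ η * (c + 1) := by nlinarith
      have h2 : η * (c + 1) = N / 2 := by
        rw [hηdef]; field_simp
      have h3 : u z ≤ ε + C * (1 - z.re) + η * c := by
        rw [hcdef] at *
        nlinarith
      nlinarith
    by_contra hcon
    push_neg at hcon
    have := step ((u z - C * (1 - z.re)) / 2) (by linarith)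
    linarith
  -- conclude the limit
  have hupper : Tendsto (fun z : ℂ => C * (1 - z.re)) (nhdsWithin 1 (ball (0:ℂ) 1)) (nhds 0) := by
    have hcont2 : Continuous fun z : ℂ => C * (1 - z.re) :=
      continuous_const.mul (continuous_const.sub Complex.continuous_re)
    have h := hcont2.tendsto 1
    simp only [Complex.one_re, sub_self, mul_zero] at h
    exact h.mono_left nhdsWithin_le_nhds
  refine tendsto_of_tendsto_of_tendsto_of_le_of_le' tendsto_const_nhds hupper ?_ ?_
  · exact eventually_nhdsWithin_of_forall (fun x hx => (hpos x hx).le)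
  · exact eventually_nhdsWithin_of_forall main2
end
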